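/- Let V be finite, and for i ∈ {1,…,r} let R^i ⊆ R^V × R^{r_i} be polytopes whose extreme points all have the form (e^v, h) for some v ∈ V and h ∈ Z^{r_i} (where e^v is a vertex of the simplex Δ^V). Then every extreme point (λ, y^1, …, y^r) of R = {(λ, y^1,…,y^r) : (λ, y^i) ∈ R^i ∀i} satisfies λ = e^v for some v ∈ V and y^i ∈ Z^{r_i} for all i. -/

import Mathlib

private lemma cdc_sum_smul_fst {α β γ : Type*} [AddCommMonoid β] [AddCommMonoid γ]
    [Module ℝ β] [Module ℝ γ] (t : Finset α) (w : α → ℝ) (f : α → β × γ) :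
    (∑ q ∈ t, w q • f q).1 = ∑ q ∈ t, w q • (f q).1 := by
  rw [Prod.fst_sum]; simp [Prod.smul_fst]

private lemma cdc_sum_smul_snd {α β γ : Type*} [AddCommMonoid β] [AddCommMonoid γ]
    [Module ℝ β] [Module ℝ γ] (t : Finset α) (w : α → ℝ) (f : α → β × γ) :
    (∑ q ∈ t, w q • f q).2 = ∑ q ∈ t, w q • (f q).2 := by
  rw [Prod.snd_sum]; simp [Prod.smul_snd]

private lemma cdc_finite_hull {V : Type*} [Fintype V] [DecidableEq V] {n : ℕ}
    {s : Set ((V → ℝ) × (Fin n → ℝ))} (hconv : Convex ℝ s) (hcomp : IsCompact s)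
    (hext : ∀ p ∈ Set.extremePoints ℝ s,
      (∃ v : V, p.1 = fun w => if w = v then (1 : ℝ) else 0) ∧
      (∀ k, ∃ z : ℤ, p.2 k = (z : ℝ))) :
    ∃ t : Finset ((V → ℝ) × (Fin n → ℝ)),
      (∀ q ∈ t, q ∈ s ∧ (∃ v : V, q.1 = fun w => if w = v then (1 : ℝ) else 0) ∧
        (∀ k, ∃ z : ℤ, q.2 k = (z : ℝ))) ∧ s ⊆ convexHull ℝ (↑t : Set _) := by
  obtain ⟨M, hM⟩ := hcomp.isBounded.subset_closedBall 0
  set G : Set ((V → ℝ) × (Fin n → ℝ)) :=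
    {q | q ∈ s ∧ (∃ v : V, q.1 = fun w => if w = v then (1 : ℝ) else 0) ∧
      (∀ k, ∃ z : ℤ, q.2 k = (z : ℝ))} with hG
  have hGfin : G.Finite := by
    set Φ : V × (Fin n → Finset.Icc (-⌈M⌉) ⌈M⌉) → ((V → ℝ) × (Fin n → ℝ)) :=
      fun x => ((fun w => if w = x.1 then (1:ℝ) else 0), fun k => ((x.2 k : ℤ) : ℝ)) with hΦ
    apply Set.Finite.subset (Set.finite_range Φ)
    rintro q ⟨hqs, ⟨v, hv⟩, hint⟩
    choose z hz using hint
    have hnq : ‖q‖ ≤ M := by simpa using mem_closedBall_zero_iff.mp (hM hqs)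
    have hzbound : ∀ k, z k ∈ Finset.Icc (-⌈M⌉) ⌈M⌉ := by
      intro k
      have h1 : |q.2 k| ≤ M := le_trans (le_trans (norm_le_pi_norm q.2 k) (norm_snd_le q)) hnq
      rw [hz k] at h1
      rw [Finset.mem_Icc]
      constructor
      · have h0 := (abs_le.mp h1).1
        have h2 : (-⌈M⌉ : ℝ) ≤ (z k : ℝ) := le_trans (by linarith [Int.le_ceil M]) h0
        exact_mod_cast h2
      · have h0 := (abs_le.mp h1).2
        have h2 : (z k : ℝ) ≤ (⌈M⌉ : ℝ) := le_trans h0 (Int.le_ceil M)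
        exact_mod_cast h2
    refine ⟨(v, fun k => ⟨z k, hzbound k⟩), ?_⟩
    simp only [hΦ]
    exact Prod.ext hv.symm (funext fun k => (hz k).symm)
  refine ⟨hGfin.toFinset, ?_, ?_⟩
  · intro q hq
    rw [Set.Finite.mem_toFinset] at hq
    exact hq
  · have hEG : s.extremePoints ℝ ⊆ G := fun q hq => ⟨hq.1, hext q hq⟩
    have hs : s = closure (convexHull ℝ (s.extremePoints ℝ)) :=
      (closure_convexHull_extremePoints hcomp hconv).symm
    intro x hx
    rw [hs] at hx
    have hsub : closure (convexHull ℝ (s.extremePoints ℝ)) ⊆ convexHull ℝ G := by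
      calc closure (convexHull ℝ (s.extremePoints ℝ))
          ⊆ closure (convexHull ℝ G) := closure_mono (convexHull_mono hEG)
        _ = convexHull ℝ G := (hGfin.isClosed_convexHull ℝ).closure_eq
    have hx' := hsub hx
    simpa [Set.Finite.coe_toFinset] using hx'

/-- If each `Rⁱ` is a polytope (compact convex set) all of whose extreme points
have the form `(e^v, h)` with `h` integral, then every extreme point
`(λ, y¹, …, yʳ)` of the combined set `R = {(λ,y¹,…,yʳ) : (λ,yⁱ) ∈ Rⁱ ∀i}`
satisfies `λ = e^v` for some `v ∈ V` and has every `yⁱ` integral. -/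
theorem combined_formulation_extreme_points
    {V : Type*} [Fintype V] [DecidableEq V] [Nonempty V] {r : ℕ}
    (ri : Fin r → ℕ)
    (R : (i : Fin r) → Set ((V → ℝ) × (Fin (ri i) → ℝ)))
    (hconv : ∀ i, Convex ℝ (R i))
    (hcomp : ∀ i, IsCompact (R i))
    (hext : ∀ i, ∀ p ∈ Set.extremePoints ℝ (R i),
      (∃ v : V, p.1 = fun w => if w = v then (1 : ℝ) else 0) ∧
      (∀ k, ∃ z : ℤ, p.2 k = (z : ℝ))) :
    ∀ p ∈ Set.extremePoints ℝ
        {q : (V → ℝ) × ((i : Fin r) → Fin (ri i) → ℝ) | ∀ i, (q.1, q.2 i) ∈ R i},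
      (∃ v : V, p.1 = fun w => if w = v then (1 : ℝ) else 0) ∧
      (∀ i k, ∃ z : ℤ, p.2 i k = (z : ℝ)) := by
  classical
  intro p hp
  obtain ⟨hpR, hpE⟩ := hp
  rcases isEmpty_or_nonempty (Fin r) with hem | hr
  · -- no constraints : the set is the whole (nontrivial) space, so no extreme points
    exfalso
    obtain ⟨v0⟩ := ‹Nonempty V›
    set c : (V → ℝ) × ((i : Fin r) → Fin (ri i) → ℝ) :=
      ((fun w => if w = v0 then (1:ℝ) else 0), fun i => isEmptyElim i) with hc
    have h1 : (p + c) ∈ {q : (V → ℝ) × ((i : Fin r) → Fin (ri i) → ℝ) |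
        ∀ i, (q.1, q.2 i) ∈ R i} := fun i => isEmptyElim i
    have h2 : (p - c) ∈ {q : (V → ℝ) × ((i : Fin r) → Fin (ri i) → ℝ) |
        ∀ i, (q.1, q.2 i) ∈ R i} := fun i => isEmptyElim i
    have hseg : p ∈ openSegment ℝ (p + c) (p - c) := by
      refine ⟨1/2, 1/2, by norm_num, by norm_num, by norm_num, ?_⟩
      module
    have hc0 := (hpE h1 h2 hseg)
    have hc0' : c = 0 := by
      have h := congrArg (fun x => x - p) hc0
      simpa [add_sub_cancel_left] using h
    have hcon := congrFun (congrArg Prod.fst hc0') v0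
    simp [hc] at hcon
  · obtain ⟨i0⟩ := hr
    have hhull := fun i => cdc_finite_hull (hconv i) (hcomp i) (hext i)
    choose t ht hsub using hhull
    have hdec : ∀ i, ∃ w : ((V → ℝ) × (Fin (ri i) → ℝ)) → ℝ,
        (∀ q ∈ t i, 0 ≤ w q) ∧ (∑ q ∈ t i, w q = 1) ∧
        (∑ q ∈ t i, w q • q = (p.1, p.2 i)) := by
      intro i
      have hmem := hsub i (hpR i)
      rw [Finset.convexHull_eq] at hmem
      obtain ⟨w, hw0, hw1, hwc⟩ := hmem
      refine ⟨w, hw0, hw1, ?_⟩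
      rw [Finset.centerMass_eq_of_sum_1 _ _ hw1] at hwc
      simpa using hwc
    choose w hw0 hw1 hwe using hdec
    have hwe1 : ∀ i, ∑ q ∈ t i, w i q • q.1 = p.1 := by
      intro i
      have h := congrArg Prod.fst (hwe i)
      rwa [cdc_sum_smul_fst (t i) (w i) (fun q => q)] at h
    have hwe2 : ∀ i, ∑ q ∈ t i, w i q • q.2 = p.2 i := by
      intro i
      have h := congrArg Prod.snd (hwe i)
      rwa [cdc_sum_smul_snd (t i) (w i) (fun q => q)] at h
    have hfst : ∀ i u, ∑ q ∈ t i, w i q * q.1 u = p.1 u := by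
      intro i u
      have h := congrFun (hwe1 i) u
      simpa using h
    have hq01 : ∀ i, ∀ q ∈ t i, ∀ u, q.1 u = 0 ∨ q.1 u = 1 := by
      intro i q hq u
      obtain ⟨v, hv⟩ := (ht i q hq).2.1
      rw [hv]
      by_cases h : u = v <;> simp [h]
    have hqnn : ∀ i, ∀ q ∈ t i, ∀ u, 0 ≤ q.1 u := by
      intro i q hq u
      rcases hq01 i q hq u with h | h <;> rw [h] <;> norm_num
    have hnn : ∀ u, 0 ≤ p.1 u := by
      intro u
      rw [← hfst i0 u]
      exact Finset.sum_nonneg fun q hq => mul_nonneg (hw0 i0 q hq) (hqnn i0 q hq u)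
    have hsum1 : ∑ u, p.1 u = 1 := by
      have hrow : ∀ q ∈ t i0, ∑ u, q.1 u = 1 := by
        intro q hq
        obtain ⟨v, hv⟩ := (ht i0 q hq).2.1
        rw [hv]
        simp
      calc ∑ u, p.1 u = ∑ u, ∑ q ∈ t i0, w i0 q * q.1 u := by
            refine Finset.sum_congr rfl fun u _ => (hfst i0 u).symm
        _ = ∑ q ∈ t i0, ∑ u, w i0 q * q.1 u := Finset.sum_comm
        _ = ∑ q ∈ t i0, w i0 q * ∑ u, q.1 u := by
            refine Finset.sum_congr rfl fun q _ => (Finset.mul_sum _ _ _).symm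
        _ = ∑ q ∈ t i0, w i0 q := by
            refine Finset.sum_congr rfl fun q hq => by rw [hrow q hq, mul_one]
        _ = 1 := hw1 i0
    -- Step 1 : the first component is a vertex of the simplex
    have hvert : ∃ v : V, p.1 = fun x => if x = v then (1:ℝ) else 0 := by
      by_contra hno
      push_neg at hno
      have hu : ∃ u, 0 < p.1 u ∧ p.1 u < 1 := by
        by_contra h01
        push_neg at h01
        have hpos : ∃ u, 0 < p.1 u := by
          by_contra hneg
          push_neg at hneg
          have hle : ∑ u, p.1 u ≤ 0 := Finset.sum_nonpos fun u _ => hneg u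
          rw [hsum1] at hle
          linarith
        obtain ⟨u, hu⟩ := hpos
        have hle : p.1 u ≤ 1 := by
          rw [← hsum1]
          exact Finset.single_le_sum (fun x _ => hnn x) (Finset.mem_univ u)
        have heq : p.1 u = 1 := le_antisymm hle (h01 u hu)
        refine hno u (funext fun x => ?_)
        by_cases hx : x = u
        · rw [hx, if_pos rfl, heq]
        · rw [if_neg hx]
          have hrest : ∑ y ∈ Finset.univ.erase u, p.1 y = 0 := by
            have h := Finset.add_sum_erase Finset.univ p.1 (Finset.mem_univ u)
            rw [hsum1] at h
            linarith
          exact (Finset.sum_eq_zero_iff_of_nonneg (fun y _ => hnn y)).mp hrest x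
            (Finset.mem_erase.mpr ⟨hx, Finset.mem_univ x⟩)
      obtain ⟨u, hu0, hu1⟩ := hu
      set a := p.1 u with ha
      have h1a : (0:ℝ) < 1 - a := by linarith
      have htpq : ∀ i, ∀ q ∈ (t i).filter (fun q => q.1 u = 1),
          q.1 = fun x => if x = u then (1:ℝ) else 0 := by
        intro i q hq
        rw [Finset.mem_filter] at hq
        obtain ⟨v, hv⟩ := (ht i q hq.1).2.1
        have huv : u = v := by
          by_contra hne
          have := hq.2
          rw [hv] at this
          simp [hne] at this
        rw [hv, ← huv]
      have htmq : ∀ i, ∀ q ∈ (t i).filter (fun q => ¬ q.1 u = 1), q.1 u = 0 := by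
        intro i q hq
        rw [Finset.mem_filter] at hq
        rcases hq01 i q hq.1 u with h | h
        · exact h
        · exact absurd h hq.2
      have hmass : ∀ i, ∑ q ∈ (t i).filter (fun q => q.1 u = 1), w i q = a := by
        intro i
        have h1 := hfst i u
        rw [← Finset.sum_filter_add_sum_filter_not (t i) (fun q => q.1 u = 1)
          (fun q => w i q * q.1 u)] at h1
        have h2 : ∑ q ∈ (t i).filter (fun q => ¬ q.1 u = 1), w i q * q.1 u = 0 :=
          Finset.sum_eq_zero fun q hq => by rw [htmq i q hq, mul_zero]
        have h3 : ∑ q ∈ (t i).filter (fun q => q.1 u = 1), w i q * q.1 u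
            = ∑ q ∈ (t i).filter (fun q => q.1 u = 1), w i q :=
          Finset.sum_congr rfl fun q hq => by
            rw [(Finset.mem_filter.mp hq).2, mul_one]
        rw [h2, add_zero, h3] at h1
        exact h1
      have hmass' : ∀ i, ∑ q ∈ (t i).filter (fun q => ¬ q.1 u = 1), w i q = 1 - a := by
        intro i
        have h1 := hw1 i
        rw [← Finset.sum_filter_add_sum_filter_not (t i) (fun q => q.1 u = 1) (w i),
          hmass i] at h1
        linarith
      have htpsum : ∀ i, ∑ q ∈ (t i).filter (fun q => q.1 u = 1), w i q • q.1
          = a • fun x => if x = u then (1:ℝ) else 0 := by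
        intro i
        have h : ∑ q ∈ (t i).filter (fun q => q.1 u = 1), w i q • q.1
            = ∑ q ∈ (t i).filter (fun q => q.1 u = 1),
                w i q • fun x => if x = u then (1:ℝ) else 0 :=
          Finset.sum_congr rfl fun q hq => by rw [htpq i q hq]
        rw [h, ← Finset.sum_smul, hmass i]
      have htmsum : ∀ i, ∑ q ∈ (t i).filter (fun q => ¬ q.1 u = 1), w i q • q.1
          = p.1 - a • fun x => if x = u then (1:ℝ) else 0 := by
        intro i
        have h := hwe1 i
        rw [← Finset.sum_filter_add_sum_filter_not (t i) (fun q => q.1 u = 1)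
          (fun q => w i q • q.1), htpsum i] at h
        exact eq_sub_of_add_eq' h
      have hQmem : ∀ i, ((fun x => if x = u then (1:ℝ) else 0),
          a⁻¹ • ∑ q ∈ (t i).filter (fun q => q.1 u = 1), w i q • q.2) ∈ R i := by
        intro i
        have hcm : ((t i).filter (fun q => q.1 u = 1)).centerMass (w i) id ∈ R i := by
          apply (hconv i).centerMass_mem
          · intro q hq; exact hw0 i q (Finset.mem_filter.mp hq).1
          · rw [hmass i]; exact hu0
          · intro q hq; exact (ht i q (Finset.mem_filter.mp hq).1).1
        rw [Finset.centerMass, hmass i] at hcm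
        simp only [id_eq] at hcm
        have hpair : a⁻¹ • ∑ q ∈ (t i).filter (fun q => q.1 u = 1), w i q • q
            = ((fun x => if x = u then (1:ℝ) else 0),
              a⁻¹ • ∑ q ∈ (t i).filter (fun q => q.1 u = 1), w i q • q.2) := by
          apply Prod.ext
          · show a⁻¹ • (∑ q ∈ (t i).filter (fun q => q.1 u = 1), w i q • q).1 = _
            rw [cdc_sum_smul_fst, htpsum i, smul_smul, inv_mul_cancel₀ (ne_of_gt hu0),
              one_smul]
          · show a⁻¹ • (∑ q ∈ (t i).filter (fun q => q.1 u = 1), w i q • q).2 = _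
            rw [cdc_sum_smul_snd]
        rwa [hpair] at hcm
      have hQ'mem : ∀ i, ((1-a)⁻¹ • (p.1 - a • fun x => if x = u then (1:ℝ) else 0),
          (1-a)⁻¹ • ∑ q ∈ (t i).filter (fun q => ¬ q.1 u = 1), w i q • q.2) ∈ R i := by
        intro i
        have hcm : ((t i).filter (fun q => ¬ q.1 u = 1)).centerMass (w i) id ∈ R i := by
          apply (hconv i).centerMass_mem
          · intro q hq; exact hw0 i q (Finset.mem_filter.mp hq).1
          · rw [hmass' i]; exact h1a
          · intro q hq; exact (ht i q (Finset.mem_filter.mp hq).1).1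
        rw [Finset.centerMass, hmass' i] at hcm
        simp only [id_eq] at hcm
        have hpair : (1-a)⁻¹ • ∑ q ∈ (t i).filter (fun q => ¬ q.1 u = 1), w i q • q
            = ((1-a)⁻¹ • (p.1 - a • fun x => if x = u then (1:ℝ) else 0),
              (1-a)⁻¹ • ∑ q ∈ (t i).filter (fun q => ¬ q.1 u = 1), w i q • q.2) := by
          apply Prod.ext
          · show (1-a)⁻¹ • (∑ q ∈ (t i).filter (fun q => ¬ q.1 u = 1), w i q • q).1 = _
            rw [cdc_sum_smul_fst, htmsum i]
          · show (1-a)⁻¹ • (∑ q ∈ (t i).filter (fun q => ¬ q.1 u = 1), w i q • q).2 = _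
            rw [cdc_sum_smul_snd]
        rwa [hpair] at hcm
      set Q : (V → ℝ) × ((i : Fin r) → Fin (ri i) → ℝ) :=
        ((fun x => if x = u then (1:ℝ) else 0),
          fun i => a⁻¹ • ∑ q ∈ (t i).filter (fun q => q.1 u = 1), w i q • q.2) with hQdef
      set Q' : (V → ℝ) × ((i : Fin r) → Fin (ri i) → ℝ) :=
        ((1-a)⁻¹ • (p.1 - a • fun x => if x = u then (1:ℝ) else 0),
          fun i => (1-a)⁻¹ • ∑ q ∈ (t i).filter (fun q => ¬ q.1 u = 1), w i q • q.2)
        with hQ'def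
      have hQS : Q ∈ {q : (V → ℝ) × ((i : Fin r) → Fin (ri i) → ℝ) |
          ∀ i, (q.1, q.2 i) ∈ R i} := fun i => hQmem i
      have hQ'S : Q' ∈ {q : (V → ℝ) × ((i : Fin r) → Fin (ri i) → ℝ) |
          ∀ i, (q.1, q.2 i) ∈ R i} := fun i => hQ'mem i
      have hpeq : a • Q + (1-a) • Q' = p := by
        apply Prod.ext
        · show a • Q.1 + (1-a) • Q'.1 = p.1
          rw [hQdef, hQ'def]
          show a • (fun x => if x = u then (1:ℝ) else 0)
            + (1-a) • ((1-a)⁻¹ • (p.1 - a • fun x => if x = u then (1:ℝ) else 0)) = p.1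
          rw [smul_smul, mul_inv_cancel₀ (ne_of_gt h1a), one_smul]
          abel
        · show (a • Q + (1-a) • Q').2 = p.2
          funext i
          show a • Q.2 i + (1-a) • Q'.2 i = p.2 i
          rw [hQdef, hQ'def]
          show a • (a⁻¹ • ∑ q ∈ (t i).filter (fun q => q.1 u = 1), w i q • q.2)
            + (1-a) • ((1-a)⁻¹ •
                ∑ q ∈ (t i).filter (fun q => ¬ q.1 u = 1), w i q • q.2) = p.2 i
          rw [smul_smul, smul_smul, mul_inv_cancel₀ (ne_of_gt hu0),
            mul_inv_cancel₀ (ne_of_gt h1a), one_smul, one_smul]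
          have h := hwe2 i
          rw [← Finset.sum_filter_add_sum_filter_not (t i) (fun q => q.1 u = 1)
            (fun q => w i q • q.2)] at h
          exact h
      have hseg : p ∈ openSegment ℝ Q Q' := ⟨a, 1-a, hu0, h1a, by ring, hpeq⟩
      have hQp := (hpE hQS hQ'S hseg)
      have h := congrFun (congrArg Prod.fst hQp) u
      rw [hQdef] at h
      have h' : p.1 u = 1 := by simpa using h.symm
      rw [ha] at hu1
      linarith
    obtain ⟨v, hv⟩ := hvert
    refine ⟨⟨v, hv⟩, ?_⟩
    -- Step 2 : integrality
    intro i k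
    have hsupp : ∀ q ∈ t i, 0 < w i q → q.1 = p.1 := by
      intro q hq hwq
      obtain ⟨vq, hvq⟩ := (ht i q hq).2.1
      have hvqv : vq = v := by
        by_contra hne
        have h0 : p.1 vq = 0 := by rw [hv]; simp [hne]
        have hone : q.1 vq = 1 := by rw [hvq]; simp
        have hterm : w i q * q.1 vq ≤ ∑ q' ∈ t i, w i q' * q'.1 vq :=
          Finset.single_le_sum
            (fun q' hq' => mul_nonneg (hw0 i q' hq') (hqnn i q' hq' vq)) hq
        rw [hfst i vq, h0, hone, mul_one] at hterm
        linarith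
      rw [hvq, hvqv, hv]
    have hq0 : ∃ q0 ∈ t i, 0 < w i q0 := by
      by_contra hno
      push_neg at hno
      have hz : ∑ q ∈ t i, w i q = 0 :=
        Finset.sum_eq_zero fun q hq => le_antisymm (hno q hq) (hw0 i q hq)
      rw [hw1 i] at hz
      norm_num at hz
    obtain ⟨q0, hq0t, hq0w⟩ := hq0
    suffices hfin : p.2 i = q0.2 by
      obtain ⟨zz, hzz⟩ := (ht i q0 hq0t).2.2 k
      exact ⟨zz, by rw [hfin]; exact hzz⟩
    have hble : w i q0 ≤ 1 := by
      rw [← hw1 i]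
      exact Finset.single_le_sum (fun q hq => hw0 i q hq) hq0t
    rcases eq_or_lt_of_le hble with hb1 | hblt
    · have hrest : ∑ q ∈ (t i).erase q0, w i q = 0 := by
        have h := Finset.add_sum_erase (t i) (w i) hq0t
        rw [hw1 i] at h
        linarith
      have hzero : ∀ q ∈ (t i).erase q0, w i q = 0 := fun q hq =>
        (Finset.sum_eq_zero_iff_of_nonneg
          (fun q' hq' => hw0 i q' (Finset.mem_of_mem_erase hq'))).mp hrest q hq
      have hsum : ∑ q ∈ t i, w i q • q = q0 := by
        rw [← Finset.add_sum_erase (t i) _ hq0t,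
          Finset.sum_eq_zero (fun q hq => by rw [hzero q hq, zero_smul]), add_zero,
          hb1, one_smul]
      rw [hwe i] at hsum
      exact congrArg Prod.snd hsum
    · have h1b : (0:ℝ) < 1 - w i q0 := by linarith
      have hrest : ∑ q ∈ (t i).erase q0, w i q = 1 - w i q0 := by
        have h := Finset.add_sum_erase (t i) (w i) hq0t
        rw [hw1 i] at h
        linarith
      have hHmem : ((1 - w i q0)⁻¹ • ∑ q ∈ (t i).erase q0, w i q • q) ∈ R i := by
        have hcm : ((t i).erase q0).centerMass (w i) id ∈ R i := by
          apply (hconv i).centerMass_mem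
          · intro q hq; exact hw0 i q (Finset.mem_of_mem_erase hq)
          · rw [hrest]; exact h1b
          · intro q hq; exact (ht i q (Finset.mem_of_mem_erase hq)).1
        rw [Finset.centerMass, hrest] at hcm
        simpa only [id_eq] using hcm
      have hH1 : ((1 - w i q0)⁻¹ • ∑ q ∈ (t i).erase q0, w i q • q).1 = p.1 := by
        have hsum : ∑ q ∈ (t i).erase q0, w i q • q.1 = (1 - w i q0) • p.1 := by
          have h := hwe1 i
          rw [← Finset.add_sum_erase (t i) _ hq0t, hsupp q0 hq0t hq0w] at h
          have h2 := eq_sub_of_add_eq' h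
          rw [h2, sub_smul, one_smul]
        show (1 - w i q0)⁻¹ • (∑ q ∈ (t i).erase q0, w i q • q).1 = p.1
        rw [cdc_sum_smul_fst, hsum, smul_smul, inv_mul_cancel₀ (ne_of_gt h1b), one_smul]
      have hH2 : ((1 - w i q0)⁻¹ • ∑ q ∈ (t i).erase q0, w i q • q).2
          = (1 - w i q0)⁻¹ • ∑ q ∈ (t i).erase q0, w i q • q.2 := by
        show (1 - w i q0)⁻¹ • (∑ q ∈ (t i).erase q0, w i q • q).2 = _
        rw [cdc_sum_smul_snd]
      set X : (V → ℝ) × ((j : Fin r) → Fin (ri j) → ℝ) :=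
        (p.1, Function.update p.2 i q0.2) with hX
      set X' : (V → ℝ) × ((j : Fin r) → Fin (ri j) → ℝ) :=
        (p.1, Function.update p.2 i
          (((1 - w i q0)⁻¹ • ∑ q ∈ (t i).erase q0, w i q • q).2)) with hX'
      have hXS : X ∈ {q : (V → ℝ) × ((j : Fin r) → Fin (ri j) → ℝ) |
          ∀ j, (q.1, q.2 j) ∈ R j} := by
        intro j
        rw [hX]
        by_cases hji : j = i
        · subst hji
          simp only [Function.update_self]
          have hq0eq : (p.1, q0.2) = q0 := by
            rw [← hsupp q0 hq0t hq0w]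
          rw [hq0eq]
          exact (ht j q0 hq0t).1
        · simp only [Function.update_of_ne hji]
          exact hpR j
      have hX'S : X' ∈ {q : (V → ℝ) × ((j : Fin r) → Fin (ri j) → ℝ) |
          ∀ j, (q.1, q.2 j) ∈ R j} := by
        intro j
        rw [hX']
        by_cases hji : j = i
        · subst hji
          simp only [Function.update_self]
          have hHeq : (p.1, ((1 - w j q0)⁻¹ • ∑ q ∈ (t j).erase q0, w j q • q).2)
              = (1 - w j q0)⁻¹ • ∑ q ∈ (t j).erase q0, w j q • q := by
            rw [← hH1]
          rw [hHeq]
          exact hHmem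
        · simp only [Function.update_of_ne hji]
          exact hpR j
      have hpeq : w i q0 • X + (1 - w i q0) • X' = p := by
        apply Prod.ext
        · show w i q0 • X.1 + (1 - w i q0) • X'.1 = p.1
          rw [hX, hX']
          show w i q0 • p.1 + (1 - w i q0) • p.1 = p.1
          rw [← add_smul]
          norm_num
        · show (w i q0 • X + (1 - w i q0) • X').2 = p.2
          funext j
          show w i q0 • X.2 j + (1 - w i q0) • X'.2 j = p.2 j
          rw [hX, hX']
          by_cases hji : j = i
          · subst hji
            simp only [Function.update_self]
            rw [hH2, smul_smul, mul_inv_cancel₀ (ne_of_gt h1b), one_smul]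
            have h := hwe2 j
            rw [← Finset.add_sum_erase (t j) _ hq0t] at h
            exact h
          · simp only [Function.update_of_ne hji]
            rw [← add_smul]
            norm_num
      have hseg : p ∈ openSegment ℝ X X' := ⟨w i q0, 1 - w i q0, hq0w, h1b, by ring, hpeq⟩
      have hXp := (hpE hXS hX'S hseg)
      have h := congrFun (congrArg Prod.snd hXp) i
      rw [hX] at h
      simp only [Function.update_self] at h
      exact h.symm
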